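/- Smallness of the exceptional set of scales (Lemma 3.9): Let n ≥ 2, let Ω ⊆ ℝⁿ be a nonempty open convex set with 0 ∈ closure(Ω), and let c > 0 and C* > 0. Assume the Dini condition ∫₀¹ M_x(t)/t² dt ≤ C* holds for every x ∈ ∂Ω with ‖x‖ ≤ 1. Then there exists a constant C, depending only on c and C*, such that ∫_{(0,1) \ S_c} t⁻¹ dt ≤ C. -/

import Mathlib

open Set
open scoped RealInnerProductSpace

noncomputable section

/-- A unit vector `ν` is an outer supporting normal of `Ω` at `y` if
`⟨ν, z − y⟩ ≤ 0` for all `z ∈ Ω`. -/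
def IsOuterNormal {E : Type*} [NormedAddCommGroup E] [InnerProductSpace ℝ E]
    (Ω : Set E) (y ν : E) : Prop :=
  ‖ν‖ = 1 ∧ ∀ z ∈ Ω, ⟪ν, z - y⟫ ≤ 0

/-- `M_x(t) = sup {⟨ν, y − x⟩ : y ∈ ∂Ω, 0 < ‖y − x‖ ≤ t, ν an outer supporting normal at y}`
(`sSup ∅ = 0` in `ℝ`, so the empty case gives `0`). -/
noncomputable def Mfun {E : Type*} [NormedAddCommGroup E] [InnerProductSpace ℝ E]
    (Ω : Set E) (x : E) (t : ℝ) : ℝ :=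
  sSup {m : ℝ | ∃ y ν : E, y ∈ frontier Ω ∧ 0 < ‖y - x‖ ∧ ‖y - x‖ ≤ t ∧
    IsOuterNormal Ω y ν ∧ m = ⟪ν, y - x⟫}

/-- The rescaled spherical slice `V_t = {ω ∈ 𝕊^{n−1} : t·ω ∈ Ω}`. -/
def Vslice {E : Type*} [NormedAddCommGroup E] [InnerProductSpace ℝ E]
    (Ω : Set E) (t : ℝ) : Set E :=
  {ω | ‖ω‖ = 1 ∧ t • ω ∈ Ω}

/-- `S_c = {t ∈ (0,1) : M₀(s) ≤ c·s for all s ∈ [t/4, 4t]}`. -/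
def Sset {E : Type*} [NormedAddCommGroup E] [InnerProductSpace ℝ E]
    (Ω : Set E) (c : ℝ) : Set ℝ :=
  {t | t ∈ Ioo (0:ℝ) 1 ∧ ∀ s ∈ Icc (t/4) (4*t), Mfun Ω 0 s ≤ c * s}

/-- Cap hypothesis: the slice `V₁` contains the geodesic cap of radius `rstar` around
the unit vector `e`. -/
def CapHyp {E : Type*} [NormedAddCommGroup E] [InnerProductSpace ℝ E]
    (Ω : Set E) (e : E) (rstar : ℝ) : Prop :=
  ‖e‖ = 1 ∧ ∀ ω : E, ‖ω‖ = 1 → Real.cos rstar < ⟪ω, e⟫ → ω ∈ Vslice Ω 1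


open MeasureTheory

open scoped ENNReal

namespace Aux39

variable {E : Type*} [NormedAddCommGroup E] [InnerProductSpace ℝ E]
variable {Ω : Set E} {x : E} {t u : ℝ}

def MS (Ω : Set E) (x : E) (t : ℝ) : Set ℝ :=
  {m : ℝ | ∃ y ν : E, y ∈ frontier Ω ∧ 0 < ‖y - x‖ ∧ ‖y - x‖ ≤ t ∧
    IsOuterNormal Ω y ν ∧ m = ⟪ν, y - x⟫}

lemma Mfun_eq (Ω : Set E) (x : E) (t : ℝ) : Mfun Ω x t = sSup (MS Ω x t) := rfl

lemma MS_le {m : ℝ} (hm : m ∈ MS Ω x t) : m ≤ t := by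
  obtain ⟨y, ν, hy, hpos, hle, ⟨hν1, _⟩, rfl⟩ := hm
  calc ⟪ν, y - x⟫ ≤ ‖ν‖ * ‖y - x‖ := real_inner_le_norm _ _
    _ = ‖y - x‖ := by rw [hν1, one_mul]
    _ ≤ t := hle

lemma MS_bdd : BddAbove (MS Ω x t) := ⟨t, fun _ hm => MS_le hm⟩

lemma MS_nonneg (hx : x ∈ closure Ω) {m : ℝ} (hm : m ∈ MS Ω x t) : 0 ≤ m := by
  obtain ⟨y, ν, hy, hpos, hle, ⟨hν1, hν⟩, rfl⟩ := hm
  have hclosed : IsClosed {z : E | ⟪ν, z - y⟫ ≤ 0} :=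
    isClosed_le (Continuous.inner continuous_const (continuous_id.sub continuous_const)) continuous_const
  have hsub : Ω ⊆ {z : E | ⟪ν, z - y⟫ ≤ 0} := fun z hz => hν z hz
  have hxle : ⟪ν, x - y⟫ ≤ 0 := closure_minimal hsub hclosed hx
  have : ⟪ν, y - x⟫ = -⟪ν, x - y⟫ := by rw [← neg_sub x y, inner_neg_right]
  linarith

lemma Mfun_nonneg (hx : x ∈ closure Ω) : 0 ≤ Mfun Ω x t :=
  Real.sSup_nonneg fun _ hm => MS_nonneg hx hm

lemma Mfun_mono (hx : x ∈ closure Ω) : Monotone (Mfun Ω x) := by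
  intro a b hab
  refine Real.sSup_le (fun m hm => le_csSup MS_bdd ?_) (Mfun_nonneg hx)
  obtain ⟨y, ν, hy, hpos, hle, hν, rfl⟩ := hm
  exact ⟨y, ν, hy, hpos, hle.trans hab, hν, rfl⟩

lemma exists_frontier (h : 0 < Mfun Ω 0 u) : ∃ y ∈ frontier Ω, ‖y‖ ≤ u := by
  rcases (MS Ω 0 u).eq_empty_or_nonempty with he | ⟨m, y, ν, hy, _, hle, _, _⟩
  · rw [Mfun_eq, he, Real.sSup_empty] at h; exact absurd h (lt_irrefl _)
  · exact ⟨y, hy, by simpa using hle⟩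

lemma Mfun_zero_le (hx : x ∈ frontier Ω) (u : ℝ) :
    Mfun Ω 0 u ≤ Mfun Ω x (u + ‖x‖) + ‖x‖ := by
  have hxcl : x ∈ closure Ω := frontier_subset_closure hx
  refine Real.sSup_le ?_ (add_nonneg (Mfun_nonneg hxcl) (norm_nonneg x))
  rintro m ⟨y, ν, hy, hpos, hle, hν, rfl⟩
  have hsplit : ⟪ν, y - 0⟫ = ⟪ν, y - x⟫ + ⟪ν, x - 0⟫ := by
    rw [← inner_add_right]; congr 1; abel
  have h2 : ⟪ν, x - 0⟫ ≤ ‖x‖ := by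
    calc ⟪ν, x - 0⟫ ≤ ‖ν‖ * ‖x - 0‖ := real_inner_le_norm _ _
      _ = ‖x‖ := by rw [hν.1, one_mul, sub_zero]
  have h3 : ⟪ν, y - x⟫ ≤ Mfun Ω x (u + ‖x‖) := by
    by_cases hyx : y = x
    · subst hyx
      simp only [sub_self, inner_zero_right]
      exact Mfun_nonneg hxcl
    · refine le_csSup MS_bdd ?_
      refine ⟨y, ν, hy, ?_, ?_, hν, rfl⟩
      · rw [norm_pos_iff]; exact sub_ne_zero.2 hyx
      · calc ‖y - x‖ ≤ ‖y‖ + ‖x‖ := norm_sub_le y x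
          _ ≤ u + ‖x‖ := by
            have : ‖y - 0‖ ≤ u := hle
            rw [sub_zero] at this; linarith
  linarith

end Aux39

set_option maxHeartbeats 2000000 in
/-- Smallness of the exceptional set of scales (Lemma 3.9). -/
theorem exceptional_scales_small {n : ℕ} (hn : 2 ≤ n) (c Cstar : ℝ)
    (hc : 0 < c) (hCstar : 0 < Cstar) :
    ∃ C : ℝ, ∀ Ω : Set (EuclideanSpace ℝ (Fin n)),
      IsOpen Ω → Convex ℝ Ω → Ω.Nonempty →
      (0 : EuclideanSpace ℝ (Fin n)) ∈ closure Ω →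
      (∀ x ∈ frontier Ω, ‖x‖ ≤ 1 →
        ∫⁻ t in Ioo (0:ℝ) 1, ENNReal.ofReal (Mfun Ω x t / t ^ 2) ≤ ENNReal.ofReal Cstar) →
      ∫⁻ t in Ioo (0:ℝ) 1 \ Sset Ω c, ENNReal.ofReal t⁻¹ ≤ ENNReal.ofReal C := by
  classical
  refine ⟨32 + 128 * (4 / c + 8 * Cstar / c), ?_⟩
  intro Ω hop hconv hne h0 hDini
  have hCrest : (0:ℝ) ≤ 4 / c + 8 * Cstar / c := by positivity
  set B : Set ℝ := Ioo (0:ℝ) 1 \ Sset Ω c with hBdefn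
  have hBdef : ∀ t ∈ B, 0 < t ∧ t < 1 ∧ ∃ s ∈ Icc (t/4) (4*t), c * s < Mfun Ω 0 s := by
    rintro t ⟨ht1, ht2⟩
    refine ⟨ht1.1, ht1.2, ?_⟩
    by_contra hcon
    push_neg at hcon
    exact ht2 ⟨ht1, fun s hs => not_lt.1 fun h => (not_lt.2 (hcon s hs)) h⟩
  -- high part bound
  have hhigh : ∫⁻ t in Ico (1/32:ℝ) 1, ENNReal.ofReal t⁻¹ ≤ ENNReal.ofReal 32 := by
    calc ∫⁻ t in Ico (1/32:ℝ) 1, ENNReal.ofReal t⁻¹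
        ≤ ∫⁻ _ in Ico (1/32:ℝ) 1, ENNReal.ofReal 32 := by
          refine setLIntegral_mono' measurableSet_Ico fun t ht => ?_
          refine ENNReal.ofReal_le_ofReal ?_
          have h0' : (0:ℝ) < 1/32 := by norm_num
          have := inv_anti₀ h0' ht.1
          simpa using this
      _ = ENNReal.ofReal 32 * volume (Ico (1/32:ℝ) 1) := setLIntegral_const _ _
      _ ≤ ENNReal.ofReal 32 * 1 := by
          gcongr
          rw [Real.volume_Ico]
          exact ENNReal.ofReal_le_one.2 (by norm_num)
      _ = ENNReal.ofReal 32 := mul_one _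
  have hsubB : B ⊆ (B ∩ Ioo 0 (1/32)) ∪ Ico (1/32) 1 := by
    intro t ht
    rcases lt_or_ge t (1/32) with h | h
    · exact Or.inl ⟨ht, (hBdef t ht).1, h⟩
    · exact Or.inr ⟨h, (hBdef t ht).2.1⟩
  by_cases hF : (frontier Ω).Nonempty
  swap
  · -- frontier empty : B = ∅
    have hB0 : B = (∅ : Set ℝ) := by
      rw [eq_empty_iff_forall_notMem]
      rintro t ⟨ht1, ht2⟩
      refine ht2 ⟨ht1, fun s hs => ?_⟩
      have hMS : Aux39.MS Ω 0 s = ∅ := by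
        rw [eq_empty_iff_forall_notMem]
        rintro m ⟨y, ν, hy, _⟩
        exact hF ⟨y, hy⟩
      have hs0 : 0 < s := lt_of_lt_of_le (by linarith [ht1.1]) hs.1
      rw [Aux39.Mfun_eq, hMS, Real.sSup_empty]
      positivity
    rw [hB0]
    simp
  -- x : closest frontier point
  obtain ⟨x, hxF, hxd⟩ : ∃ x ∈ frontier Ω, ∀ y ∈ frontier Ω, ‖x‖ ≤ ‖y‖ := by
    obtain ⟨x, hxF, hxe⟩ := IsClosed.exists_infDist_eq_dist isClosed_frontier hF
      (0 : EuclideanSpace ℝ (Fin n))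
    refine ⟨x, hxF, fun y hy => ?_⟩
    calc ‖x‖ = dist 0 x := by rw [dist_zero_left]
      _ = Metric.infDist 0 (frontier Ω) := hxe.symm
      _ ≤ dist 0 y := Metric.infDist_le_dist_of_mem hy
      _ = ‖y‖ := by rw [dist_zero_left]
  by_cases hd8 : ‖x‖ < 1/8
  swap
  · -- far frontier: low part empty
    have hlow0 : B ∩ Ioo 0 (1/32) = (∅ : Set ℝ) := by
      rw [eq_empty_iff_forall_notMem]
      rintro t ⟨htB, ht0, ht32⟩
      obtain ⟨_, _, s, hs, hMs⟩ := hBdef t htB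
      have hspos : 0 < s := lt_of_lt_of_le (by linarith) hs.1
      have hM : 0 < Mfun Ω 0 s := lt_trans (by positivity) hMs
      obtain ⟨y, hyF, hyle⟩ := Aux39.exists_frontier hM
      have h1 := hxd y hyF
      have h2 := hs.2
      push_neg at hd8
      linarith
    calc ∫⁻ t in B, ENNReal.ofReal t⁻¹
        ≤ ∫⁻ t in (B ∩ Ioo 0 (1/32)) ∪ Ico (1/32) 1, ENNReal.ofReal t⁻¹ :=
          lintegral_mono' (Measure.restrict_mono hsubB le_rfl) le_rfl
      _ ≤ (∫⁻ t in B ∩ Ioo 0 (1/32), ENNReal.ofReal t⁻¹) +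
            ∫⁻ t in Ico (1/32:ℝ) 1, ENNReal.ofReal t⁻¹ := lintegral_union_le _ _ _
      _ ≤ 0 + ENNReal.ofReal 32 := by
          rw [hlow0]
          simp only [Measure.restrict_empty, lintegral_zero_measure]
          exact add_le_add le_rfl hhigh
      _ ≤ ENNReal.ofReal (32 + 128 * (4 / c + 8 * Cstar / c)) := by
          rw [zero_add]
          exact ENNReal.ofReal_le_ofReal (by nlinarith)
  -- main case
  have hxcl : x ∈ closure Ω := frontier_subset_closure hxF
  set d := ‖x‖ with hdd
  have hd0 : (0:ℝ) ≤ d := norm_nonneg x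
  have hDx : ∫⁻ v in Ioo (0:ℝ) 1, ENNReal.ofReal (Mfun Ω x v / v ^ 2) ≤ ENNReal.ofReal Cstar :=
    hDini x hxF (by linarith)
  have hM0mono : Monotone (Mfun Ω 0) := Aux39.Mfun_mono h0
  have hM0meas : Measurable (Mfun Ω 0) := hM0mono.measurable
  have hMxmono : Monotone (Mfun Ω x) := Aux39.Mfun_mono hxcl
  have hMxmeas : Measurable (Mfun Ω x) := hMxmono.measurable
  set A : Set ℝ := Ioo (0:ℝ) (1/4) ∩ {u | c * u / 2 < Mfun Ω 0 u} with hAdef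
  have hAmeas : MeasurableSet A :=
    measurableSet_Ioo.inter (measurableSet_lt (by fun_prop) hM0meas)
  have hAd : ∀ u ∈ A, d ≤ u := by
    rintro u ⟨hu, hMu⟩
    have hu0 : (0:ℝ) < u := hu.1
    have hM : 0 < Mfun Ω 0 u := lt_of_le_of_lt (by positivity) hMu
    obtain ⟨y, hyF, hyle⟩ := Aux39.exists_frontier hM
    exact le_trans (hxd y hyF) hyle
  set φ : ℝ → ℝ≥0∞ := (Ioo (0:ℝ) 1).indicator (fun v => ENNReal.ofReal (Mfun Ω x v / v ^ 2))
    with hφdef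
  have hφmeas : Measurable φ :=
    Measurable.indicator ((hMxmeas.div (by fun_prop)).ennreal_ofReal) measurableSet_Ioo
  have hφint : ∫⁻ v, φ v ≤ ENNReal.ofReal Cstar := by
    rw [hφdef, lintegral_indicator measurableSet_Ioo]
    exact hDx
  have hscale : ∫⁻ u, φ (2 * u) = ENNReal.ofReal (1/2) * ∫⁻ v, φ v := by
    have h2 : (2:ℝ) ≠ 0 := two_ne_zero
    have hmap : ∫⁻ u, φ (2 * u) = ∫⁻ v, φ v ∂(Measure.map (fun u : ℝ => 2 * u) volume) :=
      (lintegral_map hφmeas (measurable_const_mul 2)).symm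
    rw [hmap, Real.map_volume_mul_left h2, lintegral_smul_measure]
    norm_num [abs_of_nonneg]
  -- piece 2 bound
  have hgA2 : ∫⁻ u in A ∩ Ici (4/c*d), ENNReal.ofReal u⁻¹ ≤ ENNReal.ofReal (8*Cstar/c) := by
    have hmono : ∀ u ∈ A ∩ Ici (4/c*d),
        ENNReal.ofReal u⁻¹ ≤ ENNReal.ofReal (16/c) * φ (2*u) := by
      rintro u ⟨⟨hu, hMu⟩, hud⟩
      have hu0 : (0:ℝ) < u := hu.1
      have hdu : d ≤ u := hAd u ⟨hu, hMu⟩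
      have hud' : 4/c*d ≤ u := hud
      have hdc : d ≤ c*u/4 := by
        have h1 : c/4 * (4/c*d) ≤ c/4 * u := by
          apply mul_le_mul_of_nonneg_left hud' (by positivity)
        have h2 : c/4 * (4/c*d) = d := by field_simp
        linarith
      have hMx2 : c*u/4 ≤ Mfun Ω x (2*u) := by
        have h1 : Mfun Ω 0 u ≤ Mfun Ω x (u + d) + d := Aux39.Mfun_zero_le hxF u
        have h2 : Mfun Ω x (u + d) ≤ Mfun Ω x (2*u) := hMxmono (by linarith)
        have h3 : c * u / 2 < Mfun Ω 0 u := hMu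
        linarith
      have h2u : 2*u ∈ Ioo (0:ℝ) 1 := ⟨by linarith, by have := hu.2; linarith⟩
      have hφval : φ (2*u) = ENNReal.ofReal (Mfun Ω x (2*u) / (2*u) ^ 2) :=
        indicator_of_mem h2u _
      have hreal : u⁻¹ ≤ 16/c * (Mfun Ω x (2*u) / (2*u) ^ 2) := by
        have hk : 16/c * ((c*u/4) / (2*u) ^ 2) = u⁻¹ := by
          field_simp
          ring
        calc u⁻¹ = 16/c * ((c*u/4) / (2*u) ^ 2) := hk.symm
          _ ≤ 16/c * (Mfun Ω x (2*u) / (2*u) ^ 2) := by gcongr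
      rw [hφval, ← ENNReal.ofReal_mul (by positivity : (0:ℝ) ≤ 16/c)]
      exact ENNReal.ofReal_le_ofReal hreal
    calc ∫⁻ u in A ∩ Ici (4/c*d), ENNReal.ofReal u⁻¹
        ≤ ∫⁻ u in A ∩ Ici (4/c*d), ENNReal.ofReal (16/c) * φ (2*u) :=
          setLIntegral_mono' (hAmeas.inter measurableSet_Ici) hmono
      _ ≤ ∫⁻ u, ENNReal.ofReal (16/c) * φ (2*u) := setLIntegral_le_lintegral _ _
      _ = ENNReal.ofReal (16/c) * ∫⁻ u, φ (2*u) :=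
          lintegral_const_mul _ (hφmeas.comp (measurable_const_mul 2))
      _ = ENNReal.ofReal (16/c) * (ENNReal.ofReal (1/2) * ∫⁻ v, φ v) := by rw [hscale]
      _ ≤ ENNReal.ofReal (16/c) * (ENNReal.ofReal (1/2) * ENNReal.ofReal Cstar) := by gcongr
      _ = ENNReal.ofReal (8*Cstar/c) := by
          rw [← ENNReal.ofReal_mul (by norm_num), ← ENNReal.ofReal_mul (by positivity)]
          congr 1
          field_simp
          ring
  -- piece 1 bound
  have hgA1 : ∫⁻ u in A ∩ Iio (4/c*d), ENNReal.ofReal u⁻¹ ≤ ENNReal.ofReal (4/c) := by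
    rcases eq_or_lt_of_le hd0 with hd | hd
    · have hempty : A ∩ Iio (4/c*d) = (∅ : Set ℝ) := by
        rw [eq_empty_iff_forall_notMem]
        rintro u ⟨⟨hu, _⟩, hlt⟩
        rw [← hd] at hlt
        simp only [mul_zero, mem_Iio] at hlt
        exact absurd hu.1 (by linarith)
      rw [hempty]
      simp
    · have hsub2 : A ∩ Iio (4/c*d) ⊆ Ico d (4/c*d) := fun u hu => ⟨hAd u hu.1, hu.2⟩
      calc ∫⁻ u in A ∩ Iio (4/c*d), ENNReal.ofReal u⁻¹
          ≤ ∫⁻ u in Ico d (4/c*d), ENNReal.ofReal u⁻¹ :=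
            lintegral_mono' (Measure.restrict_mono hsub2 le_rfl) le_rfl
        _ ≤ ∫⁻ _ in Ico d (4/c*d), ENNReal.ofReal d⁻¹ := by
            refine setLIntegral_mono' measurableSet_Ico fun u hu => ?_
            exact ENNReal.ofReal_le_ofReal (inv_anti₀ hd hu.1)
        _ = ENNReal.ofReal d⁻¹ * volume (Ico d (4/c*d)) := setLIntegral_const _ _
        _ = ENNReal.ofReal d⁻¹ * ENNReal.ofReal (4/c*d - d) := by rw [Real.volume_Ico]
        _ = ENNReal.ofReal (d⁻¹ * (4/c*d - d)) := (ENNReal.ofReal_mul (by positivity)).symm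
        _ ≤ ENNReal.ofReal (4/c) := by
            apply ENNReal.ofReal_le_ofReal
            have : d⁻¹ * (4/c*d - d) = 4/c - 1 := by field_simp
            rw [this]
            linarith [le_of_lt (by positivity : (0:ℝ) < 4/c)]
  have hgint : ∫⁻ u in A, ENNReal.ofReal u⁻¹ ≤ ENNReal.ofReal (4/c + 8*Cstar/c) := by
    have hAsplit : A = (A ∩ Iio (4/c*d)) ∪ (A ∩ Ici (4/c*d)) := by
      rw [← inter_union_distrib_left, Iio_union_Ici, inter_univ]
    calc ∫⁻ u in A, ENNReal.ofReal u⁻¹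
        = ∫⁻ u in (A ∩ Iio (4/c*d)) ∪ (A ∩ Ici (4/c*d)), ENNReal.ofReal u⁻¹ := by
          rw [← hAsplit]
      _ ≤ (∫⁻ u in A ∩ Iio (4/c*d), ENNReal.ofReal u⁻¹) +
            ∫⁻ u in A ∩ Ici (4/c*d), ENNReal.ofReal u⁻¹ := lintegral_union_le _ _ _
      _ ≤ ENNReal.ofReal (4/c) + ENNReal.ofReal (8*Cstar/c) := add_le_add hgA1 hgA2
      _ = ENNReal.ofReal (4/c + 8*Cstar/c) := (ENNReal.ofReal_add (by positivity) (by positivity)).symm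
  -- step (i): the Fubini argument
  set g : ℝ → ℝ≥0∞ := A.indicator (fun u => ENNReal.ofReal u⁻¹) with hgdef
  have hgmeas : Measurable g := (measurable_inv.ennreal_ofReal).indicator hAmeas
  have hgtot : ∫⁻ u, g u ≤ ENNReal.ofReal (4/c + 8*Cstar/c) := by
    rw [hgdef, lintegral_indicator hAmeas]
    exact hgint
  have hgne : ∫⁻ u, g u ≠ ∞ := ne_top_of_le_ne_top ENNReal.ofReal_ne_top hgtot
  set G : ℝ → ℝ≥0∞ := fun r => ∫⁻ u in Iic r, g u with hGdef
  have hGmono : Monotone G := fun a b hab =>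
    lintegral_mono' (Measure.restrict_mono (Iic_subset_Iic.2 hab) le_rfl) le_rfl
  have hGmeas : Measurable G := hGmono.measurable
  have hGfin : ∀ r, G r ≠ ∞ := fun r =>
    ne_top_of_le_ne_top hgne (setLIntegral_le_lintegral _ _)
  have hGsplit : ∀ t : ℝ, 0 < t →
      G (8*t) = G (t/8) + ∫⁻ u in Ioc (t/8) (8*t), g u := by
    intro t ht
    have h18 : t/8 ≤ 8*t := by linarith
    simp only [hGdef]
    rw [← Iic_union_Ioc_eq_Iic h18, lintegral_union measurableSet_Ioc (Iic_disjoint_Ioc le_rfl)]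
  set T : Set ℝ := Ioo (0:ℝ) (1/32) ∩ {t | 1 ≤ 2 * (G (8*t) - G (t/8))} with hTdef
  have hTmeas : MeasurableSet T := by
    apply measurableSet_Ioo.inter
    apply measurableSet_le measurable_const
    exact (measurable_const.mul ((hGmeas.comp (measurable_const_mul 8)).sub
      (hGmeas.comp (measurable_id.div_const 8))))
  have hBT : B ∩ Ioo 0 (1/32) ⊆ T := by
    rintro t ⟨htB, ht⟩
    obtain ⟨ht0, _, s, hs, hMs⟩ := hBdef t htB
    have hspos : 0 < s := lt_of_lt_of_le (by linarith [ht.1]) hs.1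
    have hIA : Ico s (2*s) ⊆ A := by
      rintro u ⟨hu1, hu2⟩
      have hu0 : 0 < u := lt_of_lt_of_le hspos hu1
      have hu14 : u < 1/4 := by
        have h1 := hs.2; have h2 := ht.2; linarith
      refine ⟨⟨hu0, hu14⟩, ?_⟩
      have hm1 : Mfun Ω 0 s ≤ Mfun Ω 0 u := hM0mono hu1
      have hm2 : c*u/2 < c*s := by nlinarith
      show c * u / 2 < Mfun Ω 0 u
      linarith
    have hpiece : ENNReal.ofReal (1/2) ≤ ∫⁻ u in Ico s (2*s), g u := by
      calc ENNReal.ofReal (1/2)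
          = ENNReal.ofReal (2*s)⁻¹ * volume (Ico s (2*s)) := by
            rw [Real.volume_Ico, ← ENNReal.ofReal_mul (by positivity)]
            congr 1
            field_simp
            ring
        _ = ∫⁻ _ in Ico s (2*s), ENNReal.ofReal (2*s)⁻¹ := (setLIntegral_const _ _).symm
        _ ≤ ∫⁻ u in Ico s (2*s), g u := by
            refine setLIntegral_mono' measurableSet_Ico fun u hu => ?_
            have hgu : g u = ENNReal.ofReal u⁻¹ := indicator_of_mem (hIA hu) _
            rw [hgu]
            refine ENNReal.ofReal_le_ofReal ?_
            have hu0 : 0 < u := lt_of_lt_of_le hspos hu.1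
            exact inv_anti₀ hu0 (le_of_lt hu.2)
    have hle2 : G (t/8) + ENNReal.ofReal (1/2) ≤ G (8*t) := by
      have hsub3 : Ico s (2*s) ⊆ Ioc (t/8) (8*t) := by
        rintro u ⟨hu1, hu2⟩
        have h1 := hs.1
        have h2 := hs.2
        exact ⟨by linarith, by linarith⟩
      calc G (t/8) + ENNReal.ofReal (1/2)
          ≤ G (t/8) + ∫⁻ u in Ico s (2*s), g u := by gcongr
        _ ≤ G (t/8) + ∫⁻ u in Ioc (t/8) (8*t), g u := by
            gcongr
        _ = G (8*t) := (hGsplit t ht.1).symm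
    refine ⟨ht, ?_⟩
    have h12 : ENNReal.ofReal (1/2) ≤ G (8*t) - G (t/8) :=
      ENNReal.le_sub_of_add_le_left (hGfin _) hle2
    show (1:ℝ≥0∞) ≤ 2 * (G (8*t) - G (t/8))
    calc (1:ℝ≥0∞) = 2 * ENNReal.ofReal (1/2) := by
          rw [show ((2:ℝ≥0∞)) = ENNReal.ofReal 2 by simp, ← ENNReal.ofReal_mul (by norm_num)]
          norm_num
      _ ≤ 2 * (G (8*t) - G (t/8)) := by gcongr
  set F : ℝ × ℝ → ℝ≥0∞ :=
    fun p => if p.1/8 < p.2 ∧ p.2 ≤ 8*p.1 then g p.2 * ENNReal.ofReal p.1⁻¹ else 0 with hFdef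
  have hFmeas : Measurable F := by
    refine Measurable.ite ?_ ?_ measurable_const
    · exact ((measurableSet_lt (measurable_fst.div_const 8) measurable_snd).inter
        (measurableSet_le measurable_snd (measurable_const.mul measurable_fst)))
    · exact (hgmeas.comp measurable_snd).mul (measurable_fst.inv.ennreal_ofReal)
  have hFt : ∀ t : ℝ, ∫⁻ u, F (t, u) = (∫⁻ u in Ioc (t/8) (8*t), g u) * ENNReal.ofReal t⁻¹ := by
    intro t
    have heq : ∀ u, F (t, u) =
        (Ioc (t/8) (8*t)).indicator (fun u => g u * ENNReal.ofReal t⁻¹) u := by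
      intro u
      by_cases h : t/8 < u ∧ u ≤ 8*t
      · show (if t/8 < u ∧ u ≤ 8*t then g u * ENNReal.ofReal t⁻¹ else 0) = _
        rw [if_pos h, indicator_of_mem (show u ∈ Ioc (t/8) (8*t) from ⟨h.1, h.2⟩)]
      · show (if t/8 < u ∧ u ≤ 8*t then g u * ENNReal.ofReal t⁻¹ else 0) = _
        rw [if_neg h, indicator_of_notMem (show u ∉ Ioc (t/8) (8*t) from h)]
    simp only [heq]
    rw [lintegral_indicator measurableSet_Ioc, lintegral_mul_const _ hgmeas]
  have hinner : ∀ u : ℝ, ∫⁻ t, F (t, u) ≤ 64 * g u := by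
    intro u
    by_cases hgu : g u = 0
    · have hz : ∀ t, F (t, u) = 0 := by
        intro t
        rw [hFdef]
        dsimp only
        split
        · rw [hgu, zero_mul]
        · rfl
      simp only [hz, lintegral_zero]
      exact zero_le
    · have huA : u ∈ A := by
        by_contra h
        exact hgu (indicator_of_notMem h _)
      have hu0 : 0 < u := huA.1.1
      have hpt : ∀ t, F (t, u) ≤
          (Ico (u/8) (8*u)).indicator (fun _ => g u * ENNReal.ofReal (8*u⁻¹)) t := by
        intro t
        show (if t/8 < u ∧ u ≤ 8*t then g u * ENNReal.ofReal t⁻¹ else 0) ≤ _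
        split
        · rename_i h
          have htm : t ∈ Ico (u/8) (8*u) := ⟨by linarith [h.2], by linarith [h.1]⟩
          rw [indicator_of_mem htm]
          refine mul_le_mul_right (ENNReal.ofReal_le_ofReal ?_) _
          have ht0 : 0 < t := lt_of_lt_of_le (by positivity) htm.1
          have h8 : (u/8)⁻¹ = 8*u⁻¹ := by field_simp
          rw [← h8]
          exact inv_anti₀ (by positivity) htm.1
        · exact zero_le
      calc ∫⁻ t, F (t, u)
          ≤ ∫⁻ t, (Ico (u/8) (8*u)).indicator (fun _ => g u * ENNReal.ofReal (8*u⁻¹)) t :=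
            lintegral_mono hpt
        _ = g u * ENNReal.ofReal (8*u⁻¹) * volume (Ico (u/8) (8*u)) := by
            rw [lintegral_indicator measurableSet_Ico, setLIntegral_const]
        _ ≤ 64 * g u := by
            rw [Real.volume_Ico, mul_assoc]
            have hb : ENNReal.ofReal (8*u⁻¹) * ENNReal.ofReal (8*u - u/8) ≤ 64 := by
              rw [← ENNReal.ofReal_mul (by positivity)]
              calc ENNReal.ofReal (8*u⁻¹ * (8*u - u/8)) ≤ ENNReal.ofReal 64 := by
                    apply ENNReal.ofReal_le_ofReal
                    have h63 : 8*u⁻¹ * (8*u - u/8) = 63 := by field_simp; ring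
                    linarith
                _ = 64 := by norm_num
            calc g u * (ENNReal.ofReal (8*u⁻¹) * ENNReal.ofReal (8*u - u/8))
                ≤ g u * 64 := by gcongr
              _ = 64 * g u := mul_comm _ _
  have hswap : ∫⁻ t, ∫⁻ u, F (t, u) = ∫⁻ u, ∫⁻ t, F (t, u) :=
    lintegral_lintegral_swap hFmeas.aemeasurable
  have hlow : ∫⁻ t in T, ENNReal.ofReal t⁻¹ ≤ 128 * ∫⁻ u, g u := by
    have hTpt : ∀ t ∈ T, ENNReal.ofReal t⁻¹ ≤ 2 * ∫⁻ u, F (t, u) := by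
      rintro t ⟨ht, h1⟩
      rw [hFt t]
      have hsuble : G (8*t) - G (t/8) ≤ ∫⁻ u in Ioc (t/8) (8*t), g u := by
        rw [tsub_le_iff_right]
        rw [hGsplit t ht.1]
        rw [add_comm]
      have h1' : (1:ℝ≥0∞) ≤ 2 * (G (8*t) - G (t/8)) := h1
      calc ENNReal.ofReal t⁻¹ = 1 * ENNReal.ofReal t⁻¹ := (one_mul _).symm
        _ ≤ 2 * (G (8*t) - G (t/8)) * ENNReal.ofReal t⁻¹ := mul_le_mul_left h1' _
        _ ≤ 2 * (∫⁻ u in Ioc (t/8) (8*t), g u) * ENNReal.ofReal t⁻¹ := by gcongr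
        _ = 2 * ((∫⁻ u in Ioc (t/8) (8*t), g u) * ENNReal.ofReal t⁻¹) := mul_assoc _ _ _
    calc ∫⁻ t in T, ENNReal.ofReal t⁻¹
        ≤ ∫⁻ t in T, 2 * ∫⁻ u, F (t, u) := setLIntegral_mono' hTmeas hTpt
      _ ≤ ∫⁻ t, 2 * ∫⁻ u, F (t, u) := setLIntegral_le_lintegral _ _
      _ = 2 * ∫⁻ t, ∫⁻ u, F (t, u) := lintegral_const_mul 2 hFmeas.lintegral_prod_right'
      _ = 2 * ∫⁻ u, ∫⁻ t, F (t, u) := by rw [hswap]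
      _ ≤ 2 * ∫⁻ u, 64 * g u := mul_le_mul_right (lintegral_mono hinner) 2
      _ = 2 * (64 * ∫⁻ u, g u) := by rw [lintegral_const_mul 64 hgmeas]
      _ = 128 * ∫⁻ u, g u := by rw [← mul_assoc]; norm_num
  -- final assembly
  calc ∫⁻ t in B, ENNReal.ofReal t⁻¹
      ≤ ∫⁻ t in (B ∩ Ioo 0 (1/32)) ∪ Ico (1/32) 1, ENNReal.ofReal t⁻¹ :=
        lintegral_mono' (Measure.restrict_mono hsubB le_rfl) le_rfl
    _ ≤ (∫⁻ t in B ∩ Ioo 0 (1/32), ENNReal.ofReal t⁻¹) +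
          ∫⁻ t in Ico (1/32:ℝ) 1, ENNReal.ofReal t⁻¹ := lintegral_union_le _ _ _
    _ ≤ (∫⁻ t in T, ENNReal.ofReal t⁻¹) + ENNReal.ofReal 32 :=
        add_le_add (lintegral_mono' (Measure.restrict_mono hBT le_rfl) le_rfl) hhigh
    _ ≤ 128 * ENNReal.ofReal (4/c + 8*Cstar/c) + ENNReal.ofReal 32 := by
        refine add_le_add (le_trans hlow ?_) le_rfl
        exact mul_le_mul_right hgtot _
    _ ≤ ENNReal.ofReal (32 + 128 * (4 / c + 8 * Cstar / c)) := by
        rw [show ((128:ℝ≥0∞)) = ENNReal.ofReal 128 by simp,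
          ← ENNReal.ofReal_mul (by norm_num : (0:ℝ) ≤ 128),
          ← ENNReal.ofReal_add (mul_nonneg (by norm_num) hCrest) (by norm_num : (0:ℝ) ≤ 32)]
        exact ENNReal.ofReal_le_ofReal (by linarith)
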